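/- Let A be a commutative artinian ring and S a simple A-module which is reflexive. Then the A-dual Hom_A(S, A) is a simple A-module. -/

import Mathlib

universe u

/-- Let `A` be a commutative artinian ring and `S` a simple `A`-module which is reflexive
(the canonical evaluation map `S → S**` is bijective). Then the `A`-dual `Hom_A(S, A)` is
a simple `A`-module. -/
theorem isSimpleModule_dual_of_isSimpleModule_reflexive
    (A : Type u) [CommRing A] [IsArtinianRing A]
    (S : Type u) [AddCommGroup S] [Module A S] (hS : IsSimpleModule A S)
    (hrefl : Function.Bijective (Module.Dual.eval A S)) :
    IsSimpleModule A (Module.Dual A S) := by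
  classical
  haveI := hS
  haveI : Nontrivial S := IsSimpleModule.nontrivial A S
  -- the dual is nontrivial
  haveI hDnt : Nontrivial (Module.Dual A S) := by
    rw [← not_subsingleton_iff_nontrivial]
    intro hsub
    have : ∀ x y : S, x = y := by
      intro x y
      apply hrefl.injective
      apply LinearMap.ext
      intro f
      have : f = (0 : Module.Dual A S) := Subsingleton.elim _ _
      simp [this]
    exact (exists_ne (0 : S)).elim fun x hx => hx (this x 0)
  -- the maximal ideal
  obtain ⟨m, hmmax, ⟨e⟩⟩ := isSimpleModule_iff_quot_maximal.mp hS
  haveI := hmmax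
  letI : Field (A ⧸ m) := Ideal.Quotient.field m
  -- `S` is killed by `m`
  have hmS : ∀ a ∈ m, ∀ s : S, a • s = 0 := by
    intro a ha s
    have h1 : a • e s = 0 := by
      obtain ⟨b, hb⟩ := Ideal.Quotient.mk_surjective (e s)
      rw [← hb]
      have : a • (Ideal.Quotient.mk m b) = Ideal.Quotient.mk m (a * b) := rfl
      rw [this, Ideal.Quotient.eq_zero_iff_mem]
      exact Ideal.mul_mem_right b m ha
    have h2 := congrArg e.symm h1
    rw [map_smul, map_zero, LinearEquiv.symm_apply_apply] at h2
    simpa using h2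
  -- the dual is killed by `m`
  have hMD : Module.IsTorsionBySet A (Module.Dual A S) (m : Set A) := by
    intro f a
    apply LinearMap.ext
    intro s
    rw [LinearMap.smul_apply, ← LinearMap.map_smul, hmS a.1 a.2 s, map_zero,
      LinearMap.zero_apply]
  letI kMod : Module (A ⧸ m) (Module.Dual A S) := hMD.module
  haveI : IsScalarTower A (A ⧸ m) (Module.Dual A S) := hMD.isScalarTower
  -- a nonzero functional on `S`
  obtain ⟨f0, hf0⟩ := exists_ne (0 : Module.Dual A S)
  obtain ⟨x0, hx0⟩ : ∃ x, f0 x ≠ 0 := by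
    by_contra h
    push_neg at h
    exact hf0 (LinearMap.ext fun x => h x)
  -- a surjective `A`-linear map `A ⧸ m → S`
  obtain ⟨s0, hs0⟩ := exists_ne (0 : S)
  have hker : m ≤ LinearMap.ker (LinearMap.toSpanSingleton A S s0) := by
    intro a ha
    simpa [LinearMap.toSpanSingleton, LinearMap.mem_ker] using hmS a ha s0
  set ι : (A ⧸ m) →ₗ[A] S := Submodule.liftQ m (LinearMap.toSpanSingleton A S s0) hker with hι
  have hιsurj : Function.Surjective ι := by
    intro s
    obtain ⟨a, ha⟩ := IsSimpleModule.toSpanSingleton_surjective A hs0 s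
    exact ⟨Submodule.Quotient.mk a, by rw [hι, Submodule.liftQ_apply]; simpa using ha⟩
  set g : (A ⧸ m) →ₗ[A] A := f0.comp ι with hg
  have hgne : ∃ c, g c ≠ 0 := by
    obtain ⟨c, hc⟩ := hιsurj x0
    exact ⟨c, by simp [hg, hc, hx0]⟩
  -- now prove simplicity
  haveI : Nontrivial (Submodule A (Module.Dual A S)) := (Submodule.nontrivial_iff A).mpr hDnt
  refine { toIsSimpleOrder := ⟨fun N => or_iff_not_imp_right.mpr fun hNtop => ?_⟩ }
  -- view `N` as a `(A ⧸ m)`-submodule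
  set N' : Submodule (A ⧸ m) (Module.Dual A S) :=
    { carrier := N
      add_mem' := fun ha hb => N.add_mem ha hb
      zero_mem' := N.zero_mem
      smul_mem' := by
        intro c x hx
        obtain ⟨a, rfl⟩ := Ideal.Quotient.mk_surjective c
        rw [hMD.mk_smul]
        exact N.smul_mem a hx } with hN'
  have hN'top : N' < ⊤ := by
    rw [lt_top_iff_ne_top]
    intro h
    apply hNtop
    rw [eq_top_iff]
    intro f _
    have : f ∈ N' := h ▸ Submodule.mem_top
    exact this
  haveI hfree : Module.Free (A ⧸ m) ((Module.Dual A S) ⧸ N') :=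
    Module.Free.of_divisionRing (A ⧸ m) _
  obtain ⟨ξ₀, hξ₀ne, hξ₀bot⟩ := N'.exists_dual_map_eq_bot_of_lt_top hN'top inferInstance
  -- `ξ₀` is surjective
  obtain ⟨v, hv⟩ : ∃ v, ξ₀ v ≠ 0 := by
    by_contra h
    push_neg at h
    exact hξ₀ne (LinearMap.ext fun v => h v)
  have hξ₀surj : Function.Surjective ξ₀ := by
    intro c
    refine ⟨(c * (ξ₀ v)⁻¹) • v, ?_⟩
    rw [map_smul, smul_eq_mul, mul_assoc, inv_mul_cancel₀ hv, mul_one]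
  -- the functional `ξ : Dual A S → A`
  set ξ : Module.Dual A (Module.Dual A S) := g.comp (ξ₀.restrictScalars A) with hξ
  have hξne : ξ ≠ 0 := by
    obtain ⟨c, hc⟩ := hgne
    obtain ⟨f, hf⟩ := hξ₀surj c
    intro h
    apply hc
    have := congrArg (fun φ => φ f) h
    simpa [hξ, hf] using this
  have hξN : ∀ f ∈ N, ξ f = 0 := by
    intro f hf
    have : ξ₀ f ∈ N'.map ξ₀ := Submodule.mem_map_of_mem hf
    rw [hξ₀bot] at this
    simp only [Submodule.mem_bot] at this
    simp [hξ, this]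
  -- reflexivity: `ξ = eval s'`
  obtain ⟨s', hs'⟩ := hrefl.surjective ξ
  have hs'ne : s' ≠ 0 := by
    rintro rfl
    apply hξne
    rw [← hs', map_zero]
  have hfs' : ∀ f ∈ N, f s' = 0 := by
    intro f hf
    have h1 : Module.Dual.eval A S s' f = ξ f := congrArg (fun φ => φ f) hs'
    rw [Module.Dual.eval_apply] at h1
    rw [h1]
    exact hξN f hf
  -- conclude `N = ⊥`
  rw [eq_bot_iff]
  intro f hf
  rw [Submodule.mem_bot]
  by_contra hfne
  have hkerf : LinearMap.ker f = ⊥ := by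
    rcases hS.toIsSimpleOrder.2 (LinearMap.ker f) with h | h
    · exact h
    · exact absurd (LinearMap.ext fun x => by
        simpa using (h ▸ Submodule.mem_top : x ∈ LinearMap.ker f)) hfne
  have : s' ∈ LinearMap.ker f := by simp [LinearMap.mem_ker, hfs' f hf]
  rw [hkerf, Submodule.mem_bot] at this
  exact hs'ne this
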